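/- arXiv:1202.2370 — 8 statements merged into one kernel-verified Lean document; each statement's English description precedes it below -/
import Mathlib

section
/- Let f₁, f₂ : ℕ → ℝ satisfy f₁(1) = 1, f₂(1) = 0, and for all n ≥ 1, f₁(n+1) = 2·f₁(n) + 4·f₂(n) and f₂(n+1) = 2·f₁(n) + 6·f₂(n). Then for all n ≥ 1, f₁(n) + f₂(n) = ((4 + 2·√3)^(n−1) + (4 − 2·√3)^(n−1)) / 2. -/
theorem two_tree_line_count_closed_form
    (f₁ f₂ : ℕ → ℝ)
    (h₁ : f₁ 1 = 1) (h₂ : f₂ 1 = 0)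
    (hr₁ : ∀ n : ℕ, 1 ≤ n → f₁ (n + 1) = 2 * f₁ n + 4 * f₂ n)
    (hr₂ : ∀ n : ℕ, 1 ≤ n → f₂ (n + 1) = 2 * f₁ n + 6 * f₂ n) :
    ∀ n : ℕ, 1 ≤ n →
      f₁ n + f₂ n =
        ((4 + 2 * Real.sqrt 3) ^ (n - 1) + (4 - 2 * Real.sqrt 3) ^ (n - 1)) / 2 := by
  have hs : Real.sqrt 3 ^ 2 = 3 := Real.sq_sqrt (by norm_num)
  set s := Real.sqrt 3 with hsdef
  have key : ∀ n : ℕ, 1 ≤ n →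
      f₁ n = ((3 - s) * (4 + 2*s) ^ (n-1) + (3 + s) * (4 - 2*s) ^ (n-1)) / 6 ∧
      f₂ n = (s * (4 + 2*s) ^ (n-1) - s * (4 - 2*s) ^ (n-1)) / 6 := by
    intro n hn
    induction n with
    | zero => omega
    | succ m ih =>
      rcases Nat.eq_zero_or_pos m with hm | hm
      · subst hm
        simp [h₁, h₂]
        norm_num
      · obtain ⟨k, rfl⟩ : ∃ k, m = k + 1 := ⟨m - 1, by omega⟩
        obtain ⟨ih1, ih2⟩ := ih (by omega)
        constructor
        · rw [hr₁ (k+1) (by omega), ih1, ih2]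
          simp only [Nat.add_sub_cancel]
          rw [pow_succ, pow_succ]
          linear_combination (((4 + 2*s)^k + (4 - 2*s)^k) / 3) * hs
        · rw [hr₂ (k+1) (by omega), ih1, ih2]
          simp only [Nat.add_sub_cancel]
          rw [pow_succ, pow_succ]
          linear_combination (-((4 + 2*s)^k + (4 - 2*s)^k) / 3) * hs
  intro n hn
  obtain ⟨a, b⟩ := key n hn
  rw [a, b]
  ring
end

section
/- Let f₁, f₂ : ℕ → ℝ satisfy f₁(1) = 1, f₂(1) = 0, and for all n ≥ 1, f₁(n+1) = 2·f₁(n) + 4·f₂(n) and f₂(n+1) = 2·f₁(n) + 6·f₂(n). Then for all n ≥ 0, f₁(n+1) = ((√3 − 1)/(2·√3))·(4 + 2·√3)^n + ((√3 + 1)/(2·√3))·(4 − 2·√3)^n. -/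
theorem two_tree_line_f1_closed_form
    (f₁ f₂ : ℕ → ℝ)
    (h₁ : f₁ 1 = 1) (h₂ : f₂ 1 = 0)
    (hr₁ : ∀ n : ℕ, 1 ≤ n → f₁ (n + 1) = 2 * f₁ n + 4 * f₂ n)
    (hr₂ : ∀ n : ℕ, 1 ≤ n → f₂ (n + 1) = 2 * f₁ n + 6 * f₂ n) :
    ∀ n : ℕ,
      f₁ (n + 1) =
        ((Real.sqrt 3 - 1) / (2 * Real.sqrt 3)) * (4 + 2 * Real.sqrt 3) ^ n +
          ((Real.sqrt 3 + 1) / (2 * Real.sqrt 3)) * (4 - 2 * Real.sqrt 3) ^ n := by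
  set s := Real.sqrt 3 with hs
  have hs2 : s ^ 2 = 3 := Real.sq_sqrt (by norm_num)
  have hspos : 0 < s := Real.sqrt_pos.mpr (by norm_num)
  have hsne : s ≠ 0 := ne_of_gt hspos
  have key : ∀ n : ℕ,
      f₁ (n + 1) = ((s - 1) / (2 * s)) * (4 + 2 * s) ^ n +
        ((s + 1) / (2 * s)) * (4 - 2 * s) ^ n ∧
      f₂ (n + 1) = (1 / (2 * s)) * (4 + 2 * s) ^ n -
        (1 / (2 * s)) * (4 - 2 * s) ^ n := by
    intro n
    induction n with
    | zero =>
      constructor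
      · simp [h₁]; field_simp; ring
      · simp [h₂]
    | succ n ih =>
      obtain ⟨ih1, ih2⟩ := ih
      have e1 := hr₁ (n + 1) (by omega)
      have e2 := hr₂ (n + 1) (by omega)
      rw [ih1, ih2] at e1 e2
      constructor
      · rw [e1]; field_simp; linear_combination (-2 * (4 + 2*s)^n + 2 * (4 - 2*s)^n) * hs2
      · rw [e2]; field_simp; ring
  exact fun n => (key n).1
end

section
/- Let f₁, f₂ : ℕ → ℝ satisfy f₁(1) = 1, f₂(1) = 0, and for all n ≥ 1, f₁(n+1) = 2·f₁(n) + 4·f₂(n) and f₂(n+1) = 2·f₁(n) + 6·f₂(n). Then for all n ≥ 0, f₂(n+1) = (1/(2·√3))·(4 + 2·√3)^n − (1/(2·√3))·(4 − 2·√3)^n. -/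
theorem two_tree_line_f2_closed_form
    (f₁ f₂ : ℕ → ℝ)
    (h₁ : f₁ 1 = 1) (h₂ : f₂ 1 = 0)
    (hr₁ : ∀ n : ℕ, 1 ≤ n → f₁ (n + 1) = 2 * f₁ n + 4 * f₂ n)
    (hr₂ : ∀ n : ℕ, 1 ≤ n → f₂ (n + 1) = 2 * f₁ n + 6 * f₂ n) :
    ∀ n : ℕ,
      f₂ (n + 1) =
        (1 / (2 * Real.sqrt 3)) * (4 + 2 * Real.sqrt 3) ^ n -
          (1 / (2 * Real.sqrt 3)) * (4 - 2 * Real.sqrt 3) ^ n := by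
  set s : ℝ := Real.sqrt 3 with hs_def
  have hs : s ^ 2 = 3 := Real.sq_sqrt (by norm_num)
  have hs0 : (0 : ℝ) < s := Real.sqrt_pos.mpr (by norm_num)
  have hsne : s ≠ 0 := ne_of_gt hs0
  have key : ∀ n : ℕ,
      f₁ (n + 1) = ((s - 1) * (4 + 2 * s) ^ n + (s + 1) * (4 - 2 * s) ^ n) / (2 * s) ∧
      f₂ (n + 1) = (1 / (2 * s)) * (4 + 2 * s) ^ n - (1 / (2 * s)) * (4 - 2 * s) ^ n := by
    intro n
    induction n with
    | zero =>
      constructor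
      · simp [h₁]; field_simp; ring
      · simp [h₂]
    | succ k ih =>
      obtain ⟨ihf1, ihf2⟩ := ih
      constructor
      · rw [hr₁ (k + 1) (by omega), ihf1, ihf2]
        field_simp
        linear_combination (-2 * (4 + 2 * s) ^ k + 2 * (4 - 2 * s) ^ k) * hs
      · rw [hr₂ (k + 1) (by omega), ihf1, ihf2]
        field_simp
        ring
  exact fun n => (key n).2
end

section
/- For every natural number n ≥ 1, ((4 + 2·√3)^(n−1) + (4 − 2·√3)^(n−1)) / 2 ≤ (2^n)^(29/10), where the right-hand side is the real power 2^(29·n/10). -/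
theorem two_tree_line_count_poly_bound :
    ∀ n : ℕ, 1 ≤ n →
      ((4 + 2 * Real.sqrt 3) ^ (n - 1) + (4 - 2 * Real.sqrt 3) ^ (n - 1)) / 2 ≤
        ((2 : ℝ) ^ n) ^ ((29 : ℝ) / 10) := by
  intro n hn
  have hs2 : Real.sqrt 3 ^ 2 = 3 := Real.sq_sqrt (by norm_num)
  have hs0 : (0 : ℝ) ≤ Real.sqrt 3 := Real.sqrt_nonneg 3
  have hsle : Real.sqrt 3 ≤ 1.7321 := by nlinarith [sq_nonneg (Real.sqrt 3 - 1.7321)]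
  have hsge : (1.7 : ℝ) ≤ Real.sqrt 3 := by nlinarith [sq_nonneg (Real.sqrt 3 - 1.7)]
  set a : ℝ := 4 + 2 * Real.sqrt 3 with ha
  set b : ℝ := 4 - 2 * Real.sqrt 3 with hb
  have ha1 : (1 : ℝ) ≤ a := by simp only [ha]; linarith
  have hb0 : (0 : ℝ) ≤ b := by simp only [hb]; linarith
  have hb1 : b ≤ 1 := by simp only [hb]; linarith
  set k := n - 1 with hk
  -- step 1: LHS ≤ a ^ k
  have h1 : (a ^ k + b ^ k) / 2 ≤ a ^ k := by
    have h1a : b ^ k ≤ 1 := pow_le_one₀ hb0 hb1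
    have h1b : (1 : ℝ) ≤ a ^ k := one_le_pow₀ ha1
    linarith
  -- step 2: a ≤ 2 ^ (29/10)
  have key : a ≤ (2 : ℝ) ^ ((29 : ℝ) / 10) := by
    have hr0 : (0 : ℝ) ≤ (2 : ℝ) ^ ((29 : ℝ) / 10) := Real.rpow_nonneg (by norm_num) _
    have hpow : ((2 : ℝ) ^ ((29 : ℝ) / 10)) ^ (10 : ℕ) = (2 : ℝ) ^ (29 : ℕ) := by
      rw [← Real.rpow_natCast ((2:ℝ) ^ ((29:ℝ)/10)) 10, ← Real.rpow_mul (by norm_num)]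
      norm_num
    have ha10 : a ^ (10 : ℕ) = 268377088 + 154947584 * Real.sqrt 3 := by
      simp only [ha]
      linear_combination (89109504 + 49901568 * Real.sqrt 3 + 25771008 * Real.sqrt 3 ^ 2 +
        11390976 * Real.sqrt 3 ^ 3 + 4002816 * Real.sqrt 3 ^ 4 + 1044480 * Real.sqrt 3 ^ 5 +
        187392 * Real.sqrt 3 ^ 6 + 20480 * Real.sqrt 3 ^ 7 + 1024 * Real.sqrt 3 ^ 8) * hs2
    have h10 : a ^ (10 : ℕ) ≤ ((2 : ℝ) ^ ((29 : ℝ) / 10)) ^ (10 : ℕ) := by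
      rw [hpow, ha10]; norm_num; nlinarith
    have := (pow_le_pow_iff_left₀ (by linarith : (0:ℝ) ≤ a) hr0 (by norm_num : (10:ℕ) ≠ 0)).mp h10
    exact this
  -- step 3
  have h2 : a ^ k ≤ ((2 : ℝ) ^ ((29 : ℝ) / 10)) ^ k :=
    pow_le_pow_left₀ (by linarith) key k
  have h3 : ((2 : ℝ) ^ ((29 : ℝ) / 10)) ^ k ≤ ((2 : ℝ) ^ n) ^ ((29 : ℝ) / 10) := by
    rw [← Real.rpow_natCast ((2:ℝ) ^ ((29:ℝ)/10)) k, ← Real.rpow_mul (by norm_num),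
      ← Real.rpow_natCast (2:ℝ) n, ← Real.rpow_mul (by norm_num)]
    apply Real.rpow_le_rpow_of_exponent_le (by norm_num)
    have : (k : ℝ) ≤ (n : ℝ) := by exact_mod_cast Nat.sub_le n 1
    nlinarith
  linarith
end

section
/- (Lemma 3.1) For every n ≥ 1, the total number of 2-tree-lines starting from the root that lie within the full binary tree with n levels is at most (2^n)^(29/10). That is, the number of finite sequences v₁, …, v_N (N ≥ 0) of pairwise distinct binary strings, each of length at most n − 1, such that v₁ has length 1, v₂ is a child of the root or of v₁, and v_{i+1} is a child of v_i or of v_{i−1} for every i ≥ 2, is at most 2^(29·n/10). Hence a data set whose full support tree has m = 2^n − 1 nodes has O(m^{2.9}) 2-tree-lines. -/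
/-- `q` is a child of `p` in the infinite binary tree, nodes being encoded
as finite boolean strings (the root is the empty string). -/
def IsChild (p q : List Bool) : Prop := ∃ b : Bool, q = p ++ [b]

/-- A 2-tree-line starting from the root: a finite sequence `v₁, …, v_N` of
pairwise distinct binary strings such that `v₁` is a child of the root
(i.e. has length 1), `v₂` is a child of the root or of `v₁`, and each
`v_{i+1}` with `i ≥ 2` is a child of `v_i` or of `v_{i-1}`. -/
def IsTwoTreeLine (v : List (List Bool)) : Prop :=
  v.Nodup ∧
  (∀ h : 0 < v.length, (v.get ⟨0, h⟩).length = 1) ∧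
  (∀ h : 1 < v.length,
    IsChild [] (v.get ⟨1, h⟩) ∨
      IsChild (v.get ⟨0, by omega⟩) (v.get ⟨1, h⟩)) ∧
  (∀ i : ℕ, ∀ h : i + 2 < v.length,
    IsChild (v.get ⟨i + 1, by omega⟩) (v.get ⟨i + 2, h⟩) ∨
      IsChild (v.get ⟨i, by omega⟩) (v.get ⟨i + 2, h⟩))

inductive Tok : Type
  | L (b : Bool)
  | S (b : Bool)
  | F
  deriving DecidableEq

/-- chain form of the 2-tree-line condition, relative to previous two nodes -/
def TChain : List Bool → List Bool → List (List Bool) → Prop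
  | _, _, [] => True
  | pp, p, x :: r => (IsChild p x ∨ IsChild pp x) ∧ TChain p x r

def dec : List Bool → List Bool → List Tok → List (List Bool)
  | _, _, [] => []
  | _, p, Tok.L b :: ts => (p ++ [b]) :: dec p (p ++ [b]) ts
  | pp, p, Tok.S b :: ts => (pp ++ [b]) :: dec p (pp ++ [b]) ts
  | pp, p, Tok.F :: ts =>
      (pp ++ [!(p.getLastD false)]) :: dec p (pp ++ [!(p.getLastD false)]) ts

def enc : List Bool → List Bool → List (List Bool) → List Tok
  | _, _, [] => []
  | pp, p, x :: r =>
    if x = p ++ [false] then Tok.L false :: enc p x r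
    else if x = p ++ [true] then Tok.L true :: enc p x r
    else if p = pp ++ [false] ∨ p = pp ++ [true] then Tok.F :: enc p x r
    else if x = pp ++ [false] then Tok.S false :: enc p x r
    else Tok.S true :: enc p x r

def Gt : ℕ → Finset (List Tok) × Finset (List Tok) × Finset (List Tok)
  | 0 =>
    ({([] : List Tok)} ∪ ({([] : List Tok)} : Finset (List Tok)).image (Tok.F :: ·),
     {([] : List Tok)} ∪ ({([] : List Tok)} : Finset (List Tok)).image (Tok.S false :: ·)
        ∪ ({([] : List Tok)} : Finset (List Tok)).image (Tok.S true :: ·),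
     {([] : List Tok)})
  | b + 1 =>
    let X := (Gt b).1
    let Y := (Gt b).2.1
    let Z' := {([] : List Tok)} ∪ X.image (Tok.L false :: ·) ∪ X.image (Tok.L true :: ·) ∪
      Y.image (Tok.S false :: ·) ∪ Y.image (Tok.S true :: ·)
    let X' := {([] : List Tok)} ∪ X.image (Tok.L false :: ·) ∪ X.image (Tok.L true :: ·) ∪
      Z'.image (Tok.F :: ·)
    let Y' := {([] : List Tok)} ∪ X.image (Tok.L false :: ·) ∪ X.image (Tok.L true :: ·) ∪
      Z'.image (Tok.S false :: ·) ∪ Z'.image (Tok.S true :: ·)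
    (X', Y', Z')

abbrev GX (b : ℕ) := (Gt b).1
abbrev GY (b : ℕ) := (Gt b).2.1
abbrev GZ (b : ℕ) := (Gt b).2.2

lemma GZ_zero : GZ 0 = {([] : List Tok)} := rfl

lemma GX_zero : GX 0 = {([] : List Tok)} ∪ (GZ 0).image (Tok.F :: ·) := rfl

lemma GY_zero : GY 0 = {([] : List Tok)} ∪ (GZ 0).image (Tok.S false :: ·)
    ∪ (GZ 0).image (Tok.S true :: ·) := rfl

lemma GZ_succ (b : ℕ) : GZ (b+1) = {([] : List Tok)} ∪ (GX b).image (Tok.L false :: ·)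
    ∪ (GX b).image (Tok.L true :: ·) ∪ (GY b).image (Tok.S false :: ·)
    ∪ (GY b).image (Tok.S true :: ·) := rfl

lemma GX_succ (b : ℕ) : GX (b+1) = {([] : List Tok)} ∪ (GX b).image (Tok.L false :: ·)
    ∪ (GX b).image (Tok.L true :: ·) ∪ (GZ (b+1)).image (Tok.F :: ·) := rfl

lemma GY_succ (b : ℕ) : GY (b+1) = {([] : List Tok)} ∪ (GX b).image (Tok.L false :: ·)
    ∪ (GX b).image (Tok.L true :: ·) ∪ (GZ (b+1)).image (Tok.S false :: ·)
    ∪ (GZ (b+1)).image (Tok.S true :: ·) := rfl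

lemma nil_mem_GX (b : ℕ) : [] ∈ GX b := by
  cases b
  · rw [GX_zero]; exact Finset.mem_union_left _ (Finset.mem_singleton_self _)
  · rw [GX_succ]
    exact Finset.mem_union_left _ (Finset.mem_union_left _
      (Finset.mem_union_left _ (Finset.mem_singleton_self _)))

lemma nil_mem_GY (b : ℕ) : [] ∈ GY b := by
  cases b
  · rw [GY_zero]
    exact Finset.mem_union_left _ (Finset.mem_union_left _ (Finset.mem_singleton_self _))
  · rw [GY_succ]
    exact Finset.mem_union_left _ (Finset.mem_union_left _ (Finset.mem_union_left _
      (Finset.mem_union_left _ (Finset.mem_singleton_self _))))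

lemma nil_mem_GZ (b : ℕ) : [] ∈ GZ b := by
  cases b
  · rw [GZ_zero]; exact Finset.mem_singleton_self _
  · rw [GZ_succ]
    exact Finset.mem_union_left _ (Finset.mem_union_left _ (Finset.mem_union_left _
      (Finset.mem_union_left _ (Finset.mem_singleton_self _))))

lemma mem_L_X (b : ℕ) (bit : Bool) (w : List Tok) (hw : w ∈ GX b) :
    Tok.L bit :: w ∈ GX (b+1) := by
  rw [GX_succ]
  cases bit
  · exact Finset.mem_union_left _ (Finset.mem_union_left _
      (Finset.mem_union_right _ (Finset.mem_image_of_mem _ hw)))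
  · exact Finset.mem_union_left _ (Finset.mem_union_right _ (Finset.mem_image_of_mem _ hw))

lemma mem_L_Y (b : ℕ) (bit : Bool) (w : List Tok) (hw : w ∈ GX b) :
    Tok.L bit :: w ∈ GY (b+1) := by
  rw [GY_succ]
  cases bit
  · exact Finset.mem_union_left _ (Finset.mem_union_left _ (Finset.mem_union_left _
      (Finset.mem_union_right _ (Finset.mem_image_of_mem _ hw))))
  · exact Finset.mem_union_left _ (Finset.mem_union_left _
      (Finset.mem_union_right _ (Finset.mem_image_of_mem _ hw)))

lemma mem_L_Z (b : ℕ) (bit : Bool) (w : List Tok) (hw : w ∈ GX b) :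
    Tok.L bit :: w ∈ GZ (b+1) := by
  rw [GZ_succ]
  cases bit
  · exact Finset.mem_union_left _ (Finset.mem_union_left _ (Finset.mem_union_left _
      (Finset.mem_union_right _ (Finset.mem_image_of_mem _ hw))))
  · exact Finset.mem_union_left _ (Finset.mem_union_left _
      (Finset.mem_union_right _ (Finset.mem_image_of_mem _ hw)))

lemma mem_F (b : ℕ) (w : List Tok) (hw : w ∈ GZ b) : Tok.F :: w ∈ GX b := by
  cases b
  · rw [GX_zero]; exact Finset.mem_union_right _ (Finset.mem_image_of_mem _ hw)
  · rw [GX_succ]; exact Finset.mem_union_right _ (Finset.mem_image_of_mem _ hw)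

lemma mem_S_Y (b : ℕ) (bit : Bool) (w : List Tok) (hw : w ∈ GZ b) :
    Tok.S bit :: w ∈ GY b := by
  cases b
  · rw [GY_zero]
    cases bit
    · exact Finset.mem_union_left _ (Finset.mem_union_right _ (Finset.mem_image_of_mem _ hw))
    · exact Finset.mem_union_right _ (Finset.mem_image_of_mem _ hw)
  · rw [GY_succ]
    cases bit
    · exact Finset.mem_union_left _ (Finset.mem_union_right _ (Finset.mem_image_of_mem _ hw))
    · exact Finset.mem_union_right _ (Finset.mem_image_of_mem _ hw)

lemma mem_S_Z (b : ℕ) (bit : Bool) (w : List Tok) (hw : w ∈ GY b) :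
    Tok.S bit :: w ∈ GZ (b+1) := by
  rw [GZ_succ]
  cases bit
  · exact Finset.mem_union_left _ (Finset.mem_union_right _ (Finset.mem_image_of_mem _ hw))
  · exact Finset.mem_union_right _ (Finset.mem_image_of_mem _ hw)

lemma enc_mem (m : ℕ) :
    ∀ (v : List (List Bool)) (pp p : List Bool) (b : ℕ),
      TChain pp p v → (∀ x ∈ v, x.length ≤ m) → p.length + b = m →
      ((∃ c : Bool, p = pp ++ [c]) → enc pp p v ∈ GX b) ∧
      ((p.length = pp.length + 1 ∧ ¬∃ c : Bool, p = pp ++ [c]) → enc pp p v ∈ GY b) ∧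
      (p.length = pp.length → enc pp p v ∈ GZ b) := by
  intro v
  induction v with
  | nil =>
    intro pp p b _ _ _
    exact ⟨fun _ => nil_mem_GX b, fun _ => nil_mem_GY b, fun _ => nil_mem_GZ b⟩
  | cons x r ih =>
    intro pp p b hch hlen hb
    obtain ⟨hstep, hchr⟩ := hch
    have hxm : x.length ≤ m := hlen x List.mem_cons_self
    have hlenr : ∀ y ∈ r, y.length ≤ m := fun y hy => hlen y (List.mem_cons_of_mem _ hy)
    by_cases h1 : x = p ++ [false]
    · -- L false step
      have hxl : x.length = p.length + 1 := by simp [h1]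
      obtain ⟨b', rfl⟩ : ∃ b', b = b' + 1 := ⟨b - 1, by omega⟩
      have hmem : enc p x r ∈ GX b' :=
        (ih p x b' hchr hlenr (by omega)).1 ⟨false, h1⟩
      have henc : enc pp p (x :: r) = Tok.L false :: enc p x r := by
        simp [enc, h1]
      rw [henc]
      exact ⟨fun _ => mem_L_X b' false _ hmem, fun _ => mem_L_Y b' false _ hmem,
        fun _ => mem_L_Z b' false _ hmem⟩
    · by_cases h2 : x = p ++ [true]
      · -- L true step
        have hxl : x.length = p.length + 1 := by simp [h2]
        obtain ⟨b', rfl⟩ : ∃ b', b = b' + 1 := ⟨b - 1, by omega⟩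
        have hmem : enc p x r ∈ GX b' :=
          (ih p x b' hchr hlenr (by omega)).1 ⟨true, h2⟩
        have henc : enc pp p (x :: r) = Tok.L true :: enc p x r := by
          simp [enc, h1, h2]
        rw [henc]
        exact ⟨fun _ => mem_L_X b' true _ hmem, fun _ => mem_L_Y b' true _ hmem,
          fun _ => mem_L_Z b' true _ hmem⟩
      · -- x is a child of pp
        have hxpp : ∃ c : Bool, x = pp ++ [c] := by
          rcases hstep with ⟨c, hc⟩ | h
          · cases c
            · exact absurd hc h1
            · exact absurd hc h2
          · exact h
        obtain ⟨c, hc⟩ := hxpp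
        have hxl : x.length = pp.length + 1 := by simp [hc]
        by_cases h3 : p = pp ++ [false] ∨ p = pp ++ [true]
        · -- F step (only possible towards GX)
          have henc : enc pp p (x :: r) = Tok.F :: enc p x r := by
            simp [enc, h1, h2, h3]
          rw [henc]
          have hpl : p.length = pp.length + 1 := by
            rcases h3 with h | h <;> simp [h]
          have hmem : enc p x r ∈ GZ b :=
            (ih p x b hchr hlenr (by omega)).2.2 (by omega)
          refine ⟨fun _ => mem_F b _ hmem, fun hy => absurd ?_ hy.2, fun hz => ?_⟩
          · rcases h3 with h | h
            · exact ⟨false, h⟩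
            · exact ⟨true, h⟩
          · exfalso
            rcases h3 with h | h <;> simp [h] at hz
        · -- S step
          have hxnotp : ¬∃ c' : Bool, x = p ++ [c'] := by
            rintro ⟨c', hc'⟩
            cases c'
            · exact h1 hc'
            · exact h2 hc'
          have henc : enc pp p (x :: r) = Tok.S c :: enc p x r := by
            cases c
            · show (if x = p ++ [false] then Tok.L false :: enc p x r
                else if x = p ++ [true] then Tok.L true :: enc p x r
                else if p = pp ++ [false] ∨ p = pp ++ [true] then Tok.F :: enc p x r
                else if x = pp ++ [false] then Tok.S false :: enc p x r
                else Tok.S true :: enc p x r) = _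
              rw [if_neg h1, if_neg h2, if_neg h3, if_pos hc]
            · have h4 : ¬ x = pp ++ [false] := by
                rw [hc]; simp
              show (if x = p ++ [false] then Tok.L false :: enc p x r
                else if x = p ++ [true] then Tok.L true :: enc p x r
                else if p = pp ++ [false] ∨ p = pp ++ [true] then Tok.F :: enc p x r
                else if x = pp ++ [false] then Tok.S false :: enc p x r
                else Tok.S true :: enc p x r) = _
              rw [if_neg h1, if_neg h2, if_neg h3, if_neg h4]
          rw [henc]
          constructor
          · rintro ⟨c', hc'⟩
            exact absurd (by cases c' <;> [exact Or.inl hc'; exact Or.inr hc']) h3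
          constructor
          · -- state Y : |p| = |pp| + 1, p not a child of pp; new state D at same budget
            rintro ⟨hpl, -⟩
            have hmem : enc p x r ∈ GZ b :=
              (ih p x b hchr hlenr (by omega)).2.2 (by omega)
            exact mem_S_Y b c _ hmem
          · -- state Z : |p| = |pp| ; new state T at budget b-1
            intro hpl
            have hxl' : x.length = p.length + 1 := by omega
            obtain ⟨b', rfl⟩ : ∃ b', b = b' + 1 := ⟨b - 1, by omega⟩
            have hmem : enc p x r ∈ GY b' :=
              (ih p x b' hchr hlenr (by omega)).2.1 ⟨by omega, hxnotp⟩
            exact mem_S_Z b' c _ hmem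

lemma dec_enc : ∀ (v : List (List Bool)) (pp p : List Bool),
    TChain pp p v → List.Chain' (· ≠ ·) (p :: v) → dec pp p (enc pp p v) = v := by
  intro v
  induction v with
  | nil => intro pp p _ _; rfl
  | cons x r ih =>
    intro pp p hch hne
    obtain ⟨hstep, hchr⟩ := hch
    obtain ⟨hpx, hner⟩ := List.isChain_cons_cons.mp hne
    by_cases h1 : x = p ++ [false]
    · have henc : enc pp p (x :: r) = Tok.L false :: enc p x r := by simp [enc, h1]
      rw [henc]
      show (p ++ [false]) :: dec p (p ++ [false]) (enc p x r) = x :: r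
      rw [← h1, ih p x hchr hner]
    · by_cases h2 : x = p ++ [true]
      · have henc : enc pp p (x :: r) = Tok.L true :: enc p x r := by simp [enc, h1, h2]
        rw [henc]
        show (p ++ [true]) :: dec p (p ++ [true]) (enc p x r) = x :: r
        rw [← h2, ih p x hchr hner]
      · have hxpp : ∃ c : Bool, x = pp ++ [c] := by
          rcases hstep with ⟨c, hc⟩ | h
          · cases c
            · exact absurd hc h1
            · exact absurd hc h2
          · exact h
        obtain ⟨c, hc⟩ := hxpp
        by_cases h3 : p = pp ++ [false] ∨ p = pp ++ [true]
        · have henc : enc pp p (x :: r) = Tok.F :: enc p x r := by simp [enc, h1, h2, h3]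
          rw [henc]
          have hx' : pp ++ [!(p.getLastD false)] = x := by
            rcases h3 with h | h
            · have hcne : c ≠ false := by
                rintro rfl
                exact hpx (by rw [h, hc])
              have hc' : c = true := by simpa using hcne
              rw [h, hc, hc', List.getLastD_concat]
              rfl
            · have hcne : c ≠ true := by
                rintro rfl
                exact hpx (by rw [h, hc])
              have hc' : c = false := by simpa using hcne
              rw [h, hc, hc', List.getLastD_concat]
              rfl
          show (pp ++ [!(p.getLastD false)]) :: dec p (pp ++ [!(p.getLastD false)]) (enc p x r)
              = x :: r
          rw [hx', ih p x hchr hner]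
        · have henc : enc pp p (x :: r) = Tok.S c :: enc p x r := by
            cases c
            · show (if x = p ++ [false] then Tok.L false :: enc p x r
                else if x = p ++ [true] then Tok.L true :: enc p x r
                else if p = pp ++ [false] ∨ p = pp ++ [true] then Tok.F :: enc p x r
                else if x = pp ++ [false] then Tok.S false :: enc p x r
                else Tok.S true :: enc p x r) = _
              rw [if_neg h1, if_neg h2, if_neg h3, if_pos hc]
            · have h4 : ¬ x = pp ++ [false] := by rw [hc]; simp
              show (if x = p ++ [false] then Tok.L false :: enc p x r
                else if x = p ++ [true] then Tok.L true :: enc p x r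
                else if p = pp ++ [false] ∨ p = pp ++ [true] then Tok.F :: enc p x r
                else if x = pp ++ [false] then Tok.S false :: enc p x r
                else Tok.S true :: enc p x r) = _
              rw [if_neg h1, if_neg h2, if_neg h3, if_neg h4]
          rw [henc]
          show (pp ++ [c]) :: dec p (pp ++ [c]) (enc p x r) = x :: r
          rw [← hc, ih p x hchr hner]

lemma tchain_aux : ∀ (v : List (List Bool)) (pp p : List Bool),
    (∀ h : 0 < v.length, IsChild p (v.get ⟨0, h⟩) ∨ IsChild pp (v.get ⟨0, h⟩)) →
    (∀ h : 1 < v.length,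
      IsChild (v.get ⟨0, by omega⟩) (v.get ⟨1, h⟩) ∨ IsChild p (v.get ⟨1, h⟩)) →
    (∀ (i : ℕ) (h : i + 2 < v.length),
      IsChild (v.get ⟨i + 1, by omega⟩) (v.get ⟨i + 2, h⟩) ∨
        IsChild (v.get ⟨i, by omega⟩) (v.get ⟨i + 2, h⟩)) →
    TChain pp p v := by
  intro v
  induction v with
  | nil => intro pp p _ _ _; trivial
  | cons x r ih =>
    intro pp p h0 h1 h2
    refine ⟨h0 (by simp), ?_⟩
    apply ih p x
    · intro h
      exact h1 (by simp; omega)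
    · intro h
      exact h2 0 (by simp; omega)
    · intro i h
      exact h2 (i + 1) (by simp at h ⊢; omega)

lemma isTwoTreeLine_tchain {v : List (List Bool)} (hv : IsTwoTreeLine v) :
    TChain [] [] v := by
  obtain ⟨-, hf, hs, ht⟩ := hv
  apply tchain_aux
  · intro h
    left
    obtain ⟨a, ha⟩ := List.length_eq_one_iff.mp (hf h)
    exact ⟨a, by simpa using ha⟩
  · intro h
    exact (hs h).symm
  · exact ht

lemma chain'_ne {v : List (List Bool)} (hv : IsTwoTreeLine v) :
    List.Chain' (· ≠ ·) (([] : List Bool) :: v) := by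
  cases v with
  | nil => exact List.isChain_singleton _
  | cons x r =>
    refine List.isChain_cons_cons.mpr ?_
    constructor
    · obtain ⟨a, ha⟩ := List.length_eq_one_iff.mp (hv.2.1 (by simp))
      simp only [List.get] at ha
      rw [ha]
      simp
    · exact List.Pairwise.isChain hv.1

lemma card_union_le' {α : Type*} [DecidableEq α] {s t : Finset α} {a c : ℕ}
    (hs : s.card ≤ a) (ht : t.card ≤ c) : (s ∪ t).card ≤ a + c :=
  le_trans (Finset.card_union_le _ _) (add_le_add hs ht)

lemma cardZ_succ (b : ℕ) :
    (GZ (b+1)).card ≤ 1 + (GX b).card + (GX b).card + (GY b).card + (GY b).card := by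
  rw [GZ_succ]
  exact card_union_le' (card_union_le' (card_union_le' (card_union_le'
    (le_of_eq (Finset.card_singleton _)) (Finset.card_image_le))
    (Finset.card_image_le)) (Finset.card_image_le)) (Finset.card_image_le)

lemma cardX_succ (b : ℕ) :
    (GX (b+1)).card ≤ 1 + (GX b).card + (GX b).card + (GZ (b+1)).card := by
  rw [GX_succ]
  exact card_union_le' (card_union_le' (card_union_le'
    (le_of_eq (Finset.card_singleton _)) (Finset.card_image_le))
    (Finset.card_image_le)) (Finset.card_image_le)

lemma cardY_succ (b : ℕ) :
    (GY (b+1)).card ≤ 1 + (GX b).card + (GX b).card + (GZ (b+1)).card + (GZ (b+1)).card := by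
  rw [GY_succ]
  exact card_union_le' (card_union_le' (card_union_le' (card_union_le'
    (le_of_eq (Finset.card_singleton _)) (Finset.card_image_le))
    (Finset.card_image_le)) (Finset.card_image_le)) (Finset.card_image_le)

lemma cardZ_zero : (GZ 0).card = 1 := rfl

lemma cardX_zero : (GX 0).card ≤ 2 := by
  rw [GX_zero]
  exact card_union_le' (le_of_eq (Finset.card_singleton _))
    (le_trans Finset.card_image_le (le_of_eq cardZ_zero))

lemma cardY_zero : (GY 0).card ≤ 3 := by
  rw [GY_zero]
  exact card_union_le' (card_union_le' (le_of_eq (Finset.card_singleton _))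
    (le_trans Finset.card_image_le (le_of_eq cardZ_zero)))
    (le_trans Finset.card_image_le (le_of_eq cardZ_zero))

lemma card_bound (b : ℕ) :
    ((GX b).card : ℝ) ≤ 3 * (4 + 2 * Real.sqrt 3) ^ b - 1 ∧
    ((GY b).card : ℝ) ≤ 3 * Real.sqrt 3 * (4 + 2 * Real.sqrt 3) ^ b - 1 ∧
    ((GZ b).card : ℝ) ≤ (3 * Real.sqrt 3 - 3) * (4 + 2 * Real.sqrt 3) ^ b := by
  have hs2 : Real.sqrt 3 ^ 2 = 3 := Real.sq_sqrt (by norm_num)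
  have hs1 : (1.7 : ℝ) ≤ Real.sqrt 3 := by
    nlinarith [Real.sqrt_nonneg 3]
  induction b with
  | zero =>
    refine ⟨?_, ?_, ?_⟩
    · calc ((GX 0).card : ℝ) ≤ 2 := by exact_mod_cast cardX_zero
        _ ≤ 3 * (4 + 2 * Real.sqrt 3) ^ 0 - 1 := by norm_num
    · calc ((GY 0).card : ℝ) ≤ 3 := by exact_mod_cast cardY_zero
        _ ≤ 3 * Real.sqrt 3 * (4 + 2 * Real.sqrt 3) ^ 0 - 1 := by nlinarith
    · calc ((GZ 0).card : ℝ) = 1 := by exact_mod_cast cardZ_zero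
        _ ≤ (3 * Real.sqrt 3 - 3) * (4 + 2 * Real.sqrt 3) ^ 0 := by nlinarith
  | succ b ihb =>
    obtain ⟨hx, hy, hz⟩ := ihb
    have hpow : (1 : ℝ) ≤ (4 + 2 * Real.sqrt 3) ^ b :=
      one_le_pow₀ (by nlinarith)
    have hps : (4 + 2 * Real.sqrt 3) ^ (b + 1) = (4 + 2 * Real.sqrt 3) * (4 + 2 * Real.sqrt 3) ^ b := by
      ring
    have hZ : ((GZ (b+1)).card : ℝ) ≤ (3 * Real.sqrt 3 - 3) * (4 + 2 * Real.sqrt 3) ^ (b + 1) := by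
      have h := cardZ_succ b
      have h' : ((GZ (b+1)).card : ℝ) ≤ 1 + (GX b).card + (GX b).card + (GY b).card + (GY b).card := by
        exact_mod_cast h
      rw [hps]
      nlinarith
    refine ⟨?_, ?_, hZ⟩
    · have h := cardX_succ b
      have h' : ((GX (b+1)).card : ℝ) ≤ 1 + (GX b).card + (GX b).card + (GZ (b+1)).card := by
        exact_mod_cast h
      rw [hps]
      nlinarith [hZ, hps]
    · have h := cardY_succ b
      have h' : ((GY (b+1)).card : ℝ) ≤ 1 + (GX b).card + (GX b).card + (GZ (b+1)).card + (GZ (b+1)).card := by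
        exact_mod_cast h
      rw [hps]
      nlinarith [hZ, hps]

lemma lam_le : 4 + 2 * Real.sqrt 3 ≤ (2 : ℝ) ^ ((29 : ℝ) / 10) := by
  have hs : Real.sqrt 3 ≤ 1.73206 := by
    nlinarith [Real.sq_sqrt (show (0:ℝ) ≤ 3 by norm_num), Real.sqrt_nonneg 3,
      sq_nonneg (Real.sqrt 3 - 1.73206)]
  have h10 : ((2 : ℝ) ^ ((29 : ℝ) / 10)) ^ (10 : ℕ) = 2 ^ (29 : ℕ) := by
    rw [← Real.rpow_natCast ((2:ℝ) ^ ((29:ℝ)/10)) 10, ← Real.rpow_mul (by norm_num)]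
    norm_num
  have hle : (4 + 2 * Real.sqrt 3) ^ (10 : ℕ) ≤ ((2 : ℝ) ^ ((29 : ℝ) / 10)) ^ (10 : ℕ) := by
    rw [h10]
    calc (4 + 2 * Real.sqrt 3) ^ (10 : ℕ) ≤ (7.46412 : ℝ) ^ (10 : ℕ) := by
          apply pow_le_pow_left₀ (by nlinarith [Real.sqrt_nonneg 3]) (by nlinarith)
      _ ≤ 2 ^ (29 : ℕ) := by norm_num
  exact le_of_pow_le_pow_left₀ (by norm_num) (by positivity) hle

/-- Lemma 3.1: the number of 2-tree-lines starting from the root and lying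
within the full binary tree with `n` levels (all node strings of length at
most `n - 1`, i.e. `m = 2^n - 1` nodes) is at most `(2^n)^(29/10) = m^{O(2.9)}`. -/
theorem count_two_tree_lines_in_full_tree_le (n : ℕ) (hn : 1 ≤ n) :
    (Nat.card {v : List (List Bool) //
        IsTwoTreeLine v ∧ ∀ p ∈ v, p.length ≤ n - 1} : ℝ) ≤
      ((2 : ℝ) ^ n) ^ ((29 : ℝ) / 10) := by
  set m := n - 1 with hm
  -- the injection into the finite set of codes
  have hcard : Nat.card {v : List (List Bool) //
      IsTwoTreeLine v ∧ ∀ p ∈ v, p.length ≤ n - 1} ≤ (GZ m).card := by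
    have := Nat.card_eq_finsetCard (GZ m)
    rw [← this]
    apply Nat.card_le_card_of_injective
      (f := fun v : {v : List (List Bool) // IsTwoTreeLine v ∧ ∀ p ∈ v, p.length ≤ n - 1} =>
        (⟨enc [] [] v.1, by
          exact (enc_mem m v.1 [] [] m (isTwoTreeLine_tchain v.2.1)
            (fun x hx => v.2.2 x hx) (by simp)).2.2 rfl⟩ : {w // w ∈ GZ m}))
    rintro ⟨v, hv⟩ ⟨w, hw⟩ heq
    simp only [Subtype.mk.injEq] at heq ⊢
    calc v = dec [] [] (enc [] [] v) :=
          (dec_enc v [] [] (isTwoTreeLine_tchain hv.1) (chain'_ne hv.1)).symm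
      _ = dec [] [] (enc [] [] w) := by rw [heq]
      _ = w := dec_enc w [] [] (isTwoTreeLine_tchain hw.1) (chain'_ne hw.1)
  have hs0 : (0 : ℝ) ≤ Real.sqrt 3 := Real.sqrt_nonneg 3
  have hZ : ((GZ m).card : ℝ) ≤ (3 * Real.sqrt 3 - 3) * (4 + 2 * Real.sqrt 3) ^ m :=
    (card_bound m).2.2
  have hstep : (3 * Real.sqrt 3 - 3) * (4 + 2 * Real.sqrt 3) ^ m
      ≤ (4 + 2 * Real.sqrt 3) ^ n := by
    have hmn : n = m + 1 := by omega
    rw [hmn, pow_succ, mul_comm ((4 + 2 * Real.sqrt 3) ^ m)]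
    apply mul_le_mul_of_nonneg_right (by nlinarith [Real.sq_sqrt (show (0:ℝ) ≤ 3 by norm_num)]) (by positivity)
  have hfin : ((4 + 2 * Real.sqrt 3) : ℝ) ^ n ≤ ((2 : ℝ) ^ n) ^ ((29 : ℝ) / 10) := by
    have hrw : ((2 : ℝ) ^ n) ^ ((29 : ℝ) / 10) = ((2 : ℝ) ^ ((29 : ℝ) / 10)) ^ n := by
      rw [← Real.rpow_natCast 2 n, ← Real.rpow_mul (by norm_num), mul_comm,
        Real.rpow_mul (by norm_num), Real.rpow_natCast]
    rw [hrw]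
    exact pow_le_pow_left₀ (by nlinarith) lam_le n
  calc (Nat.card {v : List (List Bool) //
        IsTwoTreeLine v ∧ ∀ p ∈ v, p.length ≤ n - 1} : ℝ)
      ≤ ((GZ m).card : ℝ) := by exact_mod_cast hcard
    _ ≤ (3 * Real.sqrt 3 - 3) * (4 + 2 * Real.sqrt 3) ^ m := hZ
    _ ≤ (4 + 2 * Real.sqrt 3) ^ n := hstep
    _ ≤ ((2 : ℝ) ^ n) ^ ((29 : ℝ) / 10) := hfin
end

section
/- Let v₁, …, v_N be a 2-tree-line starting from the root, i.e., pairwise distinct binary strings with v₁ of length 1, v₂ a child of the root or of v₁, and v_{i+1} a child of v_i or of v_{i−1} for every i ≥ 2. Then the lengths |v₁| ≤ |v₂| ≤ … ≤ |v_N| are nondecreasing, and for every ℓ ≥ 1 there are at most 2 indices i with |v_i| = ℓ. Consequently, if every v_i has length at most n − 1, then N ≤ 2·(n − 1); i.e., a 2-tree-line within a full support tree of depth n contains (counting the root) at most 1 + 2·(n − 1) nodes. -/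
/-- A 2-tree-line has nondecreasing node levels, contains at most 2 nodes at
each level `ℓ ≥ 1`, and hence a 2-tree-line within a full support tree of
depth `n` contains (not counting the root) at most `2 * (n - 1)` nodes. -/
theorem two_tree_line_length_bound (v : List (List Bool)) (hv : IsTwoTreeLine v) :
    (∀ i j : Fin v.length, i ≤ j → (v.get i).length ≤ (v.get j).length) ∧
    (∀ ℓ : ℕ, 1 ≤ ℓ → v.countP (fun p => p.length = ℓ) ≤ 2) ∧
    (∀ n : ℕ, 1 ≤ n → (∀ p ∈ v, p.length ≤ n - 1) → v.length ≤ 2 * (n - 1)) := by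
  obtain ⟨hnd, h1, h2, h3⟩ := hv
  set L : ℕ → ℕ := fun i => (v.getD i []).length with hLdef
  have hL : ∀ i (h : i < v.length), L i = (v.get ⟨i, h⟩).length := by
    intro i h
    simp only [hLdef, List.get_eq_getElem]
    rw [List.getD_eq_getElem v [] h]
  have step : ∀ i, i + 1 < v.length → L (i + 1) = L i ∨ L (i + 1) = L i + 1 := by
    intro i
    induction i with
    | zero =>
      intro h
      rw [hL 1 h, hL 0 (by omega)]
      rcases h2 h with ⟨b, hb⟩ | ⟨b, hb⟩
      · left; rw [hb, h1 (by omega)]; simp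
      · right; rw [hb]; simp
    | succ k ih =>
      intro h
      have ekk : k + 1 + 1 = k + 2 := by omega
      rw [ekk]
      rcases h3 k h with ⟨b, hb⟩ | ⟨b, hb⟩
      · right
        rw [hL (k + 2) h, hL (k + 1) (by omega), hb]
        simp
      · have h2k : L (k + 2) = L k + 1 := by
          rw [hL (k + 2) h, hL k (by omega), hb]; simp
        rcases ih (by omega) with he | he <;> omega
  have mono : ∀ i j, j < v.length → i ≤ j → L i ≤ L j := by
    intro i j hj hij
    induction j with
    | zero =>
      have : i = 0 := by omega
      rw [this]
    | succ m ihm =>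
      rcases Nat.lt_or_ge i (m + 1) with hlt | hge
      · have := ihm (by omega) (by omega)
        rcases step m hj with he | he <;> omega
      · have : i = m + 1 := by omega
        rw [this]
  have jump : ∀ i, i + 2 < v.length → L i + 1 ≤ L (i + 2) := by
    intro i h
    rcases h3 i h with ⟨b, hb⟩ | ⟨b, hb⟩
    · have h1' : L (i + 2) = L (i + 1) + 1 := by
        rw [hL (i + 2) h, hL (i + 1) (by omega), hb]; simp
      have := mono i (i + 1) (by omega) (by omega)
      omega
    · have h1' : L (i + 2) = L i + 1 := by
        rw [hL (i + 2) h, hL i (by omega), hb]; simp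
      omega
  have gap : ∀ i j, j < v.length → i + 2 ≤ j → L i + 1 ≤ L j := by
    intro i j hj hij
    have h1' := jump i (by omega)
    have h2' := mono (i + 2) j hj hij
    omega
  have grow : ∀ k, 2 * k < v.length → k + 1 ≤ L (2 * k) := by
    intro k
    induction k with
    | zero =>
      intro h
      rw [hL 0 (by simpa using h), h1 (by simpa using h)]
    | succ m ihm =>
      intro h
      have e1 : 2 * (m + 1) = 2 * m + 2 := by omega
      have ha := ihm (by omega)
      have hb := jump (2 * m) (by omega)
      rw [e1]
      omega
  refine ⟨?_, ?_, ?_⟩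
  · intro i j hij
    have := mono i.1 j.1 j.2 hij
    rw [hL i.1 i.2, hL j.1 j.2] at this
    simpa using this
  · intro ℓ _
    by_contra hcon
    push_neg at hcon
    rw [List.countP_eq_length_filter] at hcon
    set f := v.filter (fun p => decide (p.length = ℓ)) with hf
    have hfnd : f.Nodup := hnd.filter _
    have hmem : ∀ t (ht : t < f.length), f[t] ∈ v ∧ (f[t]).length = ℓ := by
      intro t ht
      have hm : f[t] ∈ f := List.getElem_mem ht
      exact ⟨List.mem_of_mem_filter hm, by simpa using List.of_mem_filter hm⟩
    have hne : ∀ s t (hs : s < f.length) (ht : t < f.length), s ≠ t → f[s] ≠ f[t] := by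
      intro s t hs ht hst heq
      exact hst (Fin.mk_eq_mk.mp ((List.Nodup.get_inj_iff hfnd).mp heq))
    obtain ⟨x, hx, hxe⟩ := List.mem_iff_getElem.mp (hmem 0 (by omega)).1
    obtain ⟨y, hy, hye⟩ := List.mem_iff_getElem.mp (hmem 1 (by omega)).1
    obtain ⟨z, hz, hze⟩ := List.mem_iff_getElem.mp (hmem 2 (by omega)).1
    have hxy : x ≠ y := by
      intro hh
      exact hne 0 1 (by omega) (by omega) (by omega) (by subst hh; rw [← hxe, ← hye])
    have hxz : x ≠ z := by
      intro hh
      exact hne 0 2 (by omega) (by omega) (by omega) (by subst hh; rw [← hxe, ← hze])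
    have hyz : y ≠ z := by
      intro hh
      exact hne 1 2 (by omega) (by omega) (by omega) (by subst hh; rw [← hye, ← hze])
    have hLx : L x = ℓ := by rw [hL x hx]; simp only [List.get_eq_getElem]; rw [hxe]; exact (hmem 0 (by omega)).2
    have hLy : L y = ℓ := by rw [hL y hy]; simp only [List.get_eq_getElem]; rw [hye]; exact (hmem 1 (by omega)).2
    have hLz : L z = ℓ := by rw [hL z hz]; simp only [List.get_eq_getElem]; rw [hze]; exact (hmem 2 (by omega)).2
    set p := min x (min y z) with hp
    set q := max x (max y z) with hq
    have hpq : p + 2 ≤ q := by omega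
    have hLp : L p = ℓ := by
      rcases show p = x ∨ p = y ∨ p = z by omega with hh | hh | hh <;> rw [hh] <;> assumption
    have hLq : L q = ℓ := by
      rcases show q = x ∨ q = y ∨ q = z by omega with hh | hh | hh <;> rw [hh] <;> assumption
    have hqlt : q < v.length := by omega
    have := gap p q hqlt hpq
    omega
  · intro n hn hbound
    by_contra hcon
    push_neg at hcon
    have hlt : 2 * (n - 1) < v.length := by omega
    have hg := grow (n - 1) hlt
    have hb := hbound (v.get ⟨2 * (n - 1), hlt⟩) (List.get_mem v ⟨2 * (n - 1), hlt⟩)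
    rw [← hL (2 * (n - 1)) hlt] at hb
    omega
end

section
/- (Theorem 3.2) For every n ≥ 1, the total number of nodes contained in all 2-tree-lines starting from the root that lie within the full binary tree with n levels — i.e., the sum over all such 2-tree-lines v₁, …, v_N of (N + 1), counting the root — is at most (2·n)·(2^n)^(29/10). Hence for a full support tree with m = 2^n − 1 nodes, the run time of the brute force method of checking all possible 2-tree-lines has order O(m^{2.9}·log m). -/
noncomputable section

namespace TTL

def lastN (v : List (List Bool)) : List Bool := v.getLastD []
def sndN (v : List (List Bool)) : List Bool := v.dropLast.getLastD []

lemma isChild_length {p q : List Bool} (h : IsChild p q) : q.length = p.length + 1 := by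
  obtain ⟨b, rfl⟩ := h; simp

@[simp] lemma lastN_concat (w : List (List Bool)) (x : List Bool) : lastN (w ++ [x]) = x :=
  List.getLastD_concat

@[simp] lemma sndN_concat (w : List (List Bool)) (x : List Bool) : sndN (w ++ [x]) = lastN w := by
  simp [sndN, lastN, List.dropLast_concat]

lemma lastN_eq_getElem (v : List (List Bool)) (h : v ≠ []) :
    lastN v = v[v.length - 1]'(by cases v <;> simp_all) := by
  induction v using List.reverseRecOn with
  | nil => simp at h
  | append_singleton w x ih =>
    rw [lastN_concat, List.getElem_append_right (by simp)]
    simp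

lemma sndN_eq_getElem (v : List (List Bool)) (h : 2 ≤ v.length) :
    sndN v = v[v.length - 2]'(by omega) := by
  induction v using List.reverseRecOn with
  | nil => simp at h
  | append_singleton w x ih =>
    have hw : w ≠ [] := by intro e; subst e; simp at h
    have hw1 : 1 ≤ w.length := List.length_pos_iff.mpr hw
    rw [sndN_concat, lastN_eq_getElem w hw, List.getElem_append_left (by simp; omega)]
    congr 1 <;> (try simp) <;> (try omega)

lemma lastN_mem (v : List (List Bool)) (h : v ≠ []) : lastN v ∈ v := by
  rw [lastN_eq_getElem v h]; exact List.getElem_mem _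

lemma sndN_mem (v : List (List Bool)) (h : 2 ≤ v.length) : sndN v ∈ v := by
  rw [sndN_eq_getElem v h]; exact List.getElem_mem _

lemma eq_concat (v : List (List Bool)) (h : v ≠ []) : v = v.dropLast ++ [lastN v] := by
  induction v using List.reverseRecOn with
  | nil => simp at h
  | append_singleton w x ih => simp [List.dropLast_concat]

lemma ttl_prefix {w : List (List Bool)} {x : List Bool}
    (h : IsTwoTreeLine (w ++ [x])) : IsTwoTreeLine w := by
  obtain ⟨h0, h1, h2, h3⟩ := h
  refine ⟨h0.of_append_left, ?_, ?_, ?_⟩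
  · intro hw
    have h' : 0 < (w ++ [x]).length := by simp
    have := h1 h'
    rw [List.get_eq_getElem] at this ⊢
    rwa [List.getElem_append_left hw] at this
  · intro hw
    have h' : 1 < (w ++ [x]).length := by simp; omega
    have := h2 h'
    simp only [List.get_eq_getElem] at this ⊢
    rwa [List.getElem_append_left hw, List.getElem_append_left (by omega)] at this
  · intro i hi
    have h' : i + 2 < (w ++ [x]).length := by simp; omega
    have := h3 i h'
    simp only [List.get_eq_getElem] at this ⊢
    rwa [List.getElem_append_left hi, List.getElem_append_left (show i + 1 < w.length by omega),
      List.getElem_append_left (show i < w.length by omega)] at this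

lemma ttl_first_len {v : List (List Bool)} (h : IsTwoTreeLine v) (hv : 0 < v.length) :
    (v[0]'hv).length = 1 := by
  have := h.2.1 hv
  rwa [List.get_eq_getElem] at this

lemma ttl_last_child {w : List (List Bool)} {x : List Bool}
    (h : IsTwoTreeLine (w ++ [x])) :
    IsChild (lastN w) x ∨ IsChild (sndN w) x := by
  rcases Nat.lt_or_ge w.length 2 with hw | hw
  · rcases Nat.lt_or_ge w.length 1 with hw1 | hw1
    · -- w = []
      have hwnil : w = [] := List.length_eq_zero_iff.mp (by omega)
      subst hwnil
      have h1 := ttl_first_len h (by simp)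
      simp only [List.nil_append] at h1 ⊢
      have : x.length = 1 := by simpa using h1
      obtain ⟨b, rfl⟩ := List.length_eq_one_iff.mp this
      exact Or.inl ⟨b, rfl⟩
    · -- w = [y]
      have : w.length = 1 := by omega
      obtain ⟨y, rfl⟩ := List.length_eq_one_iff.mp this
      have h' : 1 < ([y] ++ [x]).length := by simp
      have := h.2.2.1 h'
      simp only [List.get_eq_getElem] at this
      have e1 : ([y] ++ [x])[1] = x := by simp
      have e0 : ([y] ++ [x])[0] = y := by simp
      rw [e1, e0] at this
      simp only [lastN, sndN, List.getLastD, List.dropLast]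
      tauto
  · -- 2 ≤ w.length
    have hne : w ≠ [] := by intro e; subst e; simp at hw
    set k := w.length with hk
    have h' : (k - 2) + 2 < (w ++ [x]).length := by simp; omega
    have := h.2.2.2 (k - 2) h'
    simp only [List.get_eq_getElem] at this
    have e2 : (w ++ [x])[(k - 2) + 2]'(by simp; omega) = x := by
      apply List.getElem_concat_length
      omega
    have e1 : (w ++ [x])[(k - 2) + 1]'(by simp; omega) = lastN w := by
      rw [List.getElem_append_left (by omega), lastN_eq_getElem w hne]
      congr 1
      omega
    have e0 : (w ++ [x])[(k - 2)]'(by simp; omega) = sndN w := by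
      rw [List.getElem_append_left (by omega), sndN_eq_getElem w hw]
    rw [e2, e1, e0] at this
    exact this

lemma ttl_step {v : List (List Bool)} (h : IsTwoTreeLine v) (i : ℕ) (hi : i + 1 < v.length) :
    (v[i+1]'hi).length = (v[i]'(by omega)).length ∨
    (v[i+1]'hi).length = (v[i]'(by omega)).length + 1 := by
  induction i using Nat.strong_induction_on with
  | _ i ih =>
    match i with
    | 0 =>
      have := h.2.2.1 hi
      simp only [List.get_eq_getElem] at this
      rcases this with ⟨b, hb⟩ | hc
      · left
        rw [hb]
        simp [ttl_first_len h (by omega)]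
      · right; exact isChild_length hc
    | (j+1) =>
      show (v[j+2]'(by omega)).length = (v[j+1]'(by omega)).length ∨
        (v[j+2]'(by omega)).length = (v[j+1]'(by omega)).length + 1
      have := h.2.2.2 j hi
      simp only [List.get_eq_getElem] at this
      rcases this with hc | hc
      · right; exact isChild_length hc
      · have hlen := isChild_length hc
        rcases ih j (by omega) (by omega) with h1 | h1
        · right; omega
        · left; omega

lemma ttl_mono {v : List (List Bool)} (h : IsTwoTreeLine v) (i : ℕ) (hi : i + 1 < v.length) :
    (v[i]'(by omega)).length ≤ (v[i+1]'hi).length := by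
  rcases ttl_step h i hi with h1 | h1 <;> omega

lemma ttl_growth {v : List (List Bool)} (h : IsTwoTreeLine v) (i : ℕ) (hi : i < v.length) :
    i / 2 + 1 ≤ (v[i]'hi).length := by
  induction i using Nat.strong_induction_on with
  | _ i ih =>
    match i with
    | 0 => simp [ttl_first_len h hi]
    | 1 =>
      have hm : (v[0]'(by omega)).length ≤ (v[1]'hi).length := ttl_mono h 0 hi
      have h0 := ttl_first_len h (by omega)
      omega
    | (j+2) =>
      have hstep := h.2.2.2 j hi
      simp only [List.get_eq_getElem] at hstep
      have hj : j / 2 + 1 ≤ (v[j]'(by omega)).length := ih j (by omega) (by omega)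
      have hmono := ttl_mono h j (by omega)
      have : (v[j]'(by omega)).length + 1 ≤ (v[j+2]'hi).length := by
        rcases hstep with hc | hc
        · have := isChild_length hc; omega
        · have := isChild_length hc; omega
      omega

lemma ttl_mem_len {v : List (List Bool)} (h : IsTwoTreeLine v) {p : List Bool} (hp : p ∈ v) :
    1 ≤ p.length := by
  obtain ⟨i, hi, rfl⟩ := List.mem_iff_getElem.mp hp
  have := ttl_growth h i hi
  omega

lemma ttl_len_snd {v : List (List Bool)} (h : IsTwoTreeLine v) (hv : 2 ≤ v.length) :
    (lastN v).length = (sndN v).length ∨ (lastN v).length = (sndN v).length + 1 := by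
  have hne : v ≠ [] := by intro e; subst e; simp at hv
  rw [lastN_eq_getElem v hne, sndN_eq_getElem v hv]
  have hstep := ttl_step h (v.length - 2) (by omega)
  have e1 : v[v.length - 1]'(by omega) = v[v.length - 2 + 1]'(by omega) := by
    congr 1
    omega
  rw [e1]
  exact hstep

lemma ttl_length_le {v : List (List Bool)} (h : IsTwoTreeLine v) {n : ℕ} (hn : 1 ≤ n)
    (hb : ∀ p ∈ v, p.length ≤ n - 1) : v.length + 1 ≤ 2 * n - 1 := by
  rcases Nat.eq_zero_or_pos v.length with h0 | h0
  · omega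
  · have hg := ttl_growth h (v.length - 1) (by omega)
    have hbd := hb _ (List.getElem_mem (l := v) (n := v.length - 1) (by omega))
    omega

lemma finite_lists {α : Type*} {T : Set α} (hT : T.Finite) (B : ℕ) :
    {v : List α | v.length ≤ B ∧ ∀ p ∈ v, p ∈ T}.Finite := by
  induction B with
  | zero =>
    apply Set.Finite.subset (Set.finite_singleton ([] : List α))
    rintro v ⟨h1, _⟩
    simp [List.length_eq_zero_iff.mp (Nat.le_zero.mp h1)]
  | succ B ih =>
    apply Set.Finite.subset
      (((Set.finite_singleton ([] : List α)).union
        ((hT.prod ih).image (fun pw => pw.1 :: pw.2))))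
    rintro v ⟨h1, h2⟩
    cases v with
    | nil => exact Or.inl rfl
    | cons p w =>
      right
      exact ⟨(p, w), ⟨h2 p (by simp), by simp at h1; exact h1, fun q hq => h2 q (by simp [hq])⟩, rfl⟩

lemma ttl_nil : IsTwoTreeLine [] := by
  refine ⟨List.nodup_nil, ?_, ?_, ?_⟩
  · intro h; simp at h
  · intro h; simp at h
  · intro i h; simp at h

lemma not_mem_dropLast {v : List (List Bool)} (hnd : v.Nodup) (hne : v ≠ []) :
    lastN v ∉ v.dropLast := by
  have hv := eq_concat v hne
  rw [hv] at hnd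
  have := (List.nodup_append.mp hnd).2.2
  intro hmem
  exact this _ hmem _ (List.mem_singleton_self _) rfl

def lineFinite (n : ℕ) :
    {v : List (List Bool) | IsTwoTreeLine v ∧ ∀ p ∈ v, p.length ≤ n - 1}.Finite := by
  have hT : {p : List Bool | p.length ≤ n - 1}.Finite := List.finite_length_le Bool (n - 1)
  apply Set.Finite.subset (finite_lists hT hT.toFinset.card)
  rintro v ⟨hv, hb⟩
  refine ⟨?_, fun p hp => hb p hp⟩
  calc v.length = v.toFinset.card := (List.toFinset_card_of_nodup hv.1).symm
    _ ≤ hT.toFinset.card := by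
        apply Finset.card_le_card
        intro p hp
        rw [List.mem_toFinset] at hp
        exact hT.mem_toFinset.mpr (hb p hp)

def F (n : ℕ) : Finset (List (List Bool)) := (lineFinite n).toFinset

lemma mem_F {n : ℕ} {v : List (List Bool)} :
    v ∈ F n ↔ IsTwoTreeLine v ∧ ∀ p ∈ v, p.length ≤ n - 1 := Set.Finite.mem_toFinset _

lemma dropLast_mem_F {n : ℕ} {v : List (List Bool)} (hv : v ∈ F n) : v.dropLast ∈ F n := by
  rcases eq_or_ne v [] with rfl | hne
  · simpa using hv
  · obtain ⟨hline, hb⟩ := mem_F.mp hv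
    refine mem_F.mpr ⟨?_, fun p hp => hb p (List.dropLast_sublist v |>.subset hp)⟩
    have := eq_concat v hne
    rw [this] at hline
    exact ttl_prefix hline

open Classical in
noncomputable def A1 (n d : ℕ) : Finset (List (List Bool)) :=
  (F n).filter (fun v => 1 ≤ v.length ∧ (lastN v).length = d ∧
    (v.length = 1 ∨ IsChild (sndN v) (lastN v)))

open Classical in
noncomputable def A2 (n d : ℕ) : Finset (List (List Bool)) :=
  (F n).filter (fun v => 2 ≤ v.length ∧ (lastN v).length = d ∧
    (sndN v).length + 1 = d ∧ ¬ IsChild (sndN v) (lastN v))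

open Classical in
noncomputable def As (n d : ℕ) : Finset (List (List Bool)) :=
  (F n).filter (fun v => 2 ≤ v.length ∧ (lastN v).length = d ∧ (sndN v).length = d)

lemma trichotomy {n d : ℕ} {v : List (List Bool)} (hv : v ∈ F n) (h1 : 1 ≤ v.length)
    (hd : (lastN v).length = d) : v ∈ A1 n d ∪ A2 n d ∪ As n d := by
  classical
  have hline := (mem_F.mp hv).1
  rcases Nat.lt_or_ge v.length 2 with h2 | h2
  · have hv1 : v.length = 1 := by omega
    exact Finset.mem_union_left _ (Finset.mem_union_left _
      (Finset.mem_filter.mpr ⟨hv, h1, hd, Or.inl hv1⟩))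
  · by_cases hc : IsChild (sndN v) (lastN v)
    · exact Finset.mem_union_left _ (Finset.mem_union_left _
        (Finset.mem_filter.mpr ⟨hv, h1, hd, Or.inr hc⟩))
    · rcases ttl_len_snd hline h2 with he | he
      · exact Finset.mem_union_right _
          (Finset.mem_filter.mpr ⟨hv, h2, hd, by omega⟩)
      · exact Finset.mem_union_left _ (Finset.mem_union_right _
          (Finset.mem_filter.mpr ⟨hv, h2, hd, by omega, hc⟩))

lemma child_bit {p x : List Bool} (h : IsChild p x) : x = p ++ [x.getLastD false] := by
  obtain ⟨b, rfl⟩ := h; rw [List.getLastD_concat]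

lemma child_bit' {p x : List Bool} {b : Bool} (h : x = p ++ [b]) : x.getLastD false = b := by
  rw [h, List.getLastD_concat]

lemma last_child' {n : ℕ} {v : List (List Bool)} (hv : v ∈ F n) (h2 : 2 ≤ v.length) :
    IsChild (sndN v) (lastN v) ∨ IsChild (sndN v.dropLast) (lastN v) := by
  have hline := (mem_F.mp hv).1
  have hne : v ≠ [] := by intro e; subst e; simp at h2
  have hv' := eq_concat v hne
  have h := ttl_last_child (w := v.dropLast) (x := lastN v) (by rw [← hv']; exact hline)
  exact h

lemma first_len {n : ℕ} {v : List (List Bool)} (hv : v ∈ F n) (h1 : v.length = 1) :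
    (lastN v).length = 1 := by
  obtain ⟨x, rfl⟩ := List.length_eq_one_iff.mp h1
  have := ttl_first_len (mem_F.mp hv).1 (by simp)
  simpa [lastN] using this

lemma sndN_of_len_one {v : List (List Bool)} (h1 : v.length = 1) : sndN v = [] := by
  obtain ⟨x, rfl⟩ := List.length_eq_one_iff.mp h1
  rfl

lemma len_ge_two {n d : ℕ} {v : List (List Bool)} (hv : v ∈ F n) (h1 : 1 ≤ v.length)
    (hlast : (lastN v).length = d + 1) (hd : 1 ≤ d) : 2 ≤ v.length := by
  by_contra hlt
  have := first_len hv (by omega)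
  omega

/-- Structure of members of `A1 n (d+1)`. -/
lemma mem_A1_elim {n d : ℕ} {v : List (List Bool)} (hd : 1 ≤ d) (hv : v ∈ A1 n (d + 1)) :
    v.dropLast ∈ A1 n d ∪ A2 n d ∪ As n d ∧
    v = v.dropLast ++ [lastN v.dropLast ++ [(lastN v).getLastD false]] := by
  classical
  simp only [A1, Finset.mem_filter] at hv
  obtain ⟨hvF, hlen, hlast, hor⟩ := hv
  have h2 : 2 ≤ v.length := len_ge_two hvF hlen hlast hd
  have hc : IsChild (sndN v) (lastN v) := hor.resolve_left (by omega)
  have hclen := isChild_length hc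
  have hne : v ≠ [] := by intro e; subst e; simp at h2
  constructor
  · refine trichotomy (dropLast_mem_F hvF) (by simp [List.length_dropLast]; omega) ?_
    show (sndN v).length = d
    omega
  · conv_lhs => rw [eq_concat v hne]
    congr 1
    rw [show lastN v.dropLast = sndN v from rfl]
    rw [← child_bit hc]

/-- Structure of members of `A2 n (d+1)`. -/
lemma mem_A2_elim {n d : ℕ} {v : List (List Bool)} (hd : 1 ≤ d) (hv : v ∈ A2 n (d + 1)) :
    v.dropLast ∈ As n d ∧
    v = v.dropLast ++ [sndN v.dropLast ++ [(lastN v).getLastD false]] := by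
  classical
  simp only [A2, Finset.mem_filter] at hv
  obtain ⟨hvF, h2, hlast, hsnd, hnc⟩ := hv
  have hc : IsChild (sndN v.dropLast) (lastN v) := (last_child' hvF h2).resolve_left hnc
  have hclen := isChild_length hc
  have hne : v ≠ [] := by intro e; subst e; simp at h2
  have hd2 : 2 ≤ v.dropLast.length := by
    have hdl : v.dropLast.length = v.length - 1 := List.length_dropLast
    by_contra hlt
    have h1 : v.dropLast.length = 1 := by omega
    have hnil := sndN_of_len_one h1
    rw [hnil] at hclen
    simp at hclen
    omega
  constructor
  · simp only [As, Finset.mem_filter]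
    refine ⟨dropLast_mem_F hvF, hd2, ?_, by omega⟩
    show (sndN v).length = d
    omega
  · conv_lhs => rw [eq_concat v hne]
    congr 1
    rw [← child_bit hc]

/-- Structure of members of `As n d`. -/
lemma mem_As_elim {n d : ℕ} {v : List (List Bool)} (hd : 1 ≤ d) (hv : v ∈ As n d) :
    v.dropLast ∈ A1 n d ∪ A2 n d ∧
    IsChild (sndN v.dropLast) (lastN v) ∧
    v = v.dropLast ++ [sndN v.dropLast ++ [(lastN v).getLastD false]] := by
  classical
  simp only [As, Finset.mem_filter] at hv
  obtain ⟨hvF, h2, hlast, hsnd⟩ := hv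
  have hnc : ¬ IsChild (sndN v) (lastN v) := by
    intro hc
    have := isChild_length hc
    omega
  have hc : IsChild (sndN v.dropLast) (lastN v) := (last_child' hvF h2).resolve_left hnc
  have hclen := isChild_length hc
  have hne : v ≠ [] := by intro e; subst e; simp at h2
  have hcover : v.dropLast ∈ A1 n d ∪ A2 n d ∪ As n d := by
    refine trichotomy (dropLast_mem_F hvF) (by simp [List.length_dropLast]; omega) ?_
    show (sndN v).length = d
    omega
  refine ⟨?_, hc, ?_⟩
  · rcases Finset.mem_union.mp hcover with h | h
    · exact h
    · exfalso
      simp only [As, Finset.mem_filter] at h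
      obtain ⟨-, -, -, hs⟩ := h
      omega
  · conv_lhs => rw [eq_concat v hne]
    congr 1
    rw [← child_bit hc]

lemma bool_pair_card : ({false, true} : Finset Bool).card = 2 := rfl

lemma card_A1_le (n d : ℕ) (hd : 1 ≤ d) :
    (A1 n (d + 1)).card ≤ 2 * ((A1 n d).card + (A2 n d).card + (As n d).card) := by
  classical
  have key : (A1 n (d+1)).card ≤
      ((A1 n d ∪ A2 n d ∪ As n d) ×ˢ ({false, true} : Finset Bool)).card := by
    apply Finset.card_le_card_of_injOn (fun v => (v.dropLast, (lastN v).getLastD false))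
    · intro v hv
      rw [Finset.mem_coe, Finset.mem_product]
      exact ⟨(mem_A1_elim hd hv).1, by simp⟩
    · intro u hu v hv heq
      simp only [Finset.mem_coe] at hu hv
      have h1 := (mem_A1_elim hd hu).2
      have h2 := (mem_A1_elim hd hv).2
      have e1 : u.dropLast = v.dropLast := congrArg Prod.fst heq
      have e2 : (lastN u).getLastD false = (lastN v).getLastD false := congrArg Prod.snd heq
      rw [h1, h2, e1, e2]
  rw [Finset.card_product, bool_pair_card] at key
  have hu : (A1 n d ∪ A2 n d ∪ As n d).card ≤ (A1 n d).card + (A2 n d).card + (As n d).card :=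
    le_trans (Finset.card_union_le _ _)
      (by have := Finset.card_union_le (A1 n d) (A2 n d); omega)
  omega

lemma card_A2_le (n d : ℕ) (hd : 1 ≤ d) :
    (A2 n (d + 1)).card ≤ 2 * (As n d).card := by
  classical
  have key : (A2 n (d+1)).card ≤ ((As n d) ×ˢ ({false, true} : Finset Bool)).card := by
    apply Finset.card_le_card_of_injOn (fun v => (v.dropLast, (lastN v).getLastD false))
    · intro v hv
      rw [Finset.mem_coe, Finset.mem_product]
      exact ⟨(mem_A2_elim hd hv).1, by simp⟩
    · intro u hu v hv heq
      simp only [Finset.mem_coe] at hu hv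
      have h1 := (mem_A2_elim hd hu).2
      have h2 := (mem_A2_elim hd hv).2
      have e1 : u.dropLast = v.dropLast := congrArg Prod.fst heq
      have e2 : (lastN u).getLastD false = (lastN v).getLastD false := congrArg Prod.snd heq
      rw [h1, h2, e1, e2]
  rw [Finset.card_product, bool_pair_card] at key
  omega

lemma card_As_le (n d : ℕ) (hd : 1 ≤ d) :
    (As n d).card ≤ (A1 n d).card + 2 * (A2 n d).card := by
  classical
  set P1 := (As n d).filter (fun v => v.dropLast ∈ A1 n d) with hP1
  set P2 := (As n d).filter (fun v => v.dropLast ∉ A1 n d) with hP2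
  have hsplit : P1.card + P2.card = (As n d).card :=
    Finset.card_filter_add_card_filter_not _
  have hc1 : P1.card ≤ (A1 n d).card := by
    apply Finset.card_le_card_of_injOn (fun v => v.dropLast)
    · intro v hv
      exact (Finset.mem_filter.mp hv).2
    · intro u hu v hv heq
      simp only [Finset.mem_coe, hP1, Finset.mem_filter] at hu hv
      obtain ⟨huS, huA⟩ := hu
      obtain ⟨hvS, hvA⟩ := hv
      -- recover the full list from its dropLast
      have key : ∀ w ∈ As n d, w.dropLast ∈ A1 n d →
          w = w.dropLast ++ [sndN w.dropLast ++ [!((lastN w.dropLast).getLastD false)]] := by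
        intro w hw hwA
        obtain ⟨-, hc, hrec⟩ := mem_As_elim hd hw
        -- the previous node is also a child of sndN w.dropLast
        simp only [A1, Finset.mem_filter] at hwA
        obtain ⟨hwF, hwlen, hwlast, hwor⟩ := hwA
        have hcw : IsChild (sndN w.dropLast) (lastN w.dropLast) := by
          rcases hwor with h1 | h1
          · rw [sndN_of_len_one h1]
            have : (lastN w.dropLast).length = 1 := first_len hwF h1
            obtain ⟨b, hb⟩ := List.length_eq_one_iff.mp this
            exact ⟨b, by simp [hb]⟩
          · exact h1
        obtain ⟨b, hb⟩ := hc
        obtain ⟨c, hcb⟩ := hcw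
        have hwline := (mem_F.mp (Finset.mem_filter.mp hw).1).1
        have hne : w ≠ [] := by
          intro e
          rw [e] at hw
          simp only [As, Finset.mem_filter] at hw
          simp at hw
        have hmem : lastN w.dropLast ∈ w.dropLast := by
          apply lastN_mem
          intro e
          rw [e] at hwlen
          simp at hwlen
        have hnm : lastN w ∉ w.dropLast := not_mem_dropLast hwline.1 hne
        have hbc : b ≠ c := by
          intro e
          subst e
          rw [← hcb] at hb
          rw [hb] at hnm
          exact hnm hmem
        have hbit : (lastN w.dropLast).getLastD false = c := child_bit' hcb
        have hbit2 : (lastN w).getLastD false = b := child_bit' hb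
        have hb3 : (!((lastN w.dropLast).getLastD false)) = (lastN w).getLastD false := by
          rw [hbit, hbit2]
          revert hbc
          cases b <;> cases c <;> decide
        rw [hb3]
        exact hrec
      have e : u.dropLast = v.dropLast := heq
      rw [key u huS huA, e]
      exact (key v hvS hvA).symm
  have hc2 : P2.card ≤ 2 * (A2 n d).card := by
    have key : P2.card ≤ ((A2 n d) ×ˢ ({false, true} : Finset Bool)).card := by
      apply Finset.card_le_card_of_injOn (fun v => (v.dropLast, (lastN v).getLastD false))
      · intro v hv
        simp only [Finset.mem_coe, hP2, Finset.mem_filter] at hv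
        obtain ⟨hvS, hvn⟩ := hv
        obtain ⟨hcov, -, -⟩ := mem_As_elim hd hvS
        rw [Finset.mem_coe, Finset.mem_product]
        exact ⟨(Finset.mem_union.mp hcov).resolve_left hvn, by simp⟩
      · intro u hu v hv heq
        simp only [Finset.mem_coe, hP2, Finset.mem_filter] at hu hv
        have h1 := (mem_As_elim hd hu.1).2.2
        have h2 := (mem_As_elim hd hv.1).2.2
        have e1 : u.dropLast = v.dropLast := congrArg Prod.fst heq
        have e2 : (lastN u).getLastD false = (lastN v).getLastD false := congrArg Prod.snd heq
        rw [h1, h2, e1, e2]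
    rw [Finset.card_product, bool_pair_card] at key
    omega
  omega

lemma card_A1_one (n : ℕ) : (A1 n 1).card ≤ 2 := by
  classical
  have hsub : A1 n 1 ⊆ {[[false]], [[true]]} := by
    intro v hv
    simp only [A1, Finset.mem_filter] at hv
    obtain ⟨hvF, hlen, hlast, hor⟩ := hv
    have hline := (mem_F.mp hvF).1
    have h1 : v.length = 1 := by
      rcases hor with h | hc
      · exact h
      · by_contra h2
        have h2' : 2 ≤ v.length := by omega
        have hcl := isChild_length hc
        have hs : 1 ≤ (sndN v).length := ttl_mem_len hline (sndN_mem v h2')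
        omega
    obtain ⟨x, rfl⟩ := List.length_eq_one_iff.mp h1
    have hx : x.length = 1 := by simpa [lastN] using hlast
    obtain ⟨b, rfl⟩ := List.length_eq_one_iff.mp hx
    cases b <;> simp
  calc (A1 n 1).card ≤ ({[[false]], [[true]]} : Finset (List (List Bool))).card :=
        Finset.card_le_card hsub
    _ ≤ 2 := by
        apply le_trans (Finset.card_insert_le _ _)
        simp

lemma card_A2_one (n : ℕ) : (A2 n 1).card = 0 := by
  classical
  rw [Finset.card_eq_zero]
  apply Finset.eq_empty_of_forall_notMem
  intro v hv
  simp only [A2, Finset.mem_filter] at hv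
  obtain ⟨hvF, h2, hlast, hsnd, -⟩ := hv
  have hline := (mem_F.mp hvF).1
  have : 1 ≤ (sndN v).length := ttl_mem_len hline (sndN_mem v h2)
  omega

lemma cover (n : ℕ) :
    F n ⊆ insert [] ((Finset.Icc 1 (n-1)).biUnion (fun d => A1 n d ∪ A2 n d ∪ As n d)) := by
  classical
  intro v hv
  rcases eq_or_ne v [] with rfl | hne
  · exact Finset.mem_insert_self _ _
  · apply Finset.mem_insert_of_mem
    obtain ⟨hline, hb⟩ := mem_F.mp hv
    have h1 : 1 ≤ v.length := List.length_pos_iff.mpr hne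
    have hmem := lastN_mem v hne
    have hd1 : 1 ≤ (lastN v).length := ttl_mem_len hline hmem
    have hd2 : (lastN v).length ≤ n - 1 := hb _ hmem
    exact Finset.mem_biUnion.mpr ⟨(lastN v).length, Finset.mem_Icc.mpr ⟨hd1, hd2⟩,
      trichotomy hv h1 rfl⟩

lemma card_F_le (n : ℕ) :
    (F n).card ≤ 1 + ∑ d ∈ Finset.Icc 1 (n-1),
      ((A1 n d).card + (A2 n d).card + (As n d).card) := by
  classical
  have h1 := Finset.card_le_card (cover n)
  have h2 := Finset.card_insert_le ([] : List (List Bool))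
    ((Finset.Icc 1 (n-1)).biUnion (fun d => A1 n d ∪ A2 n d ∪ As n d))
  have h3 := Finset.card_biUnion_le (s := Finset.Icc 1 (n-1))
    (t := fun d => A1 n d ∪ A2 n d ∪ As n d)
  have h5 : ∑ d ∈ Finset.Icc 1 (n-1), (A1 n d ∪ A2 n d ∪ As n d).card ≤
      ∑ d ∈ Finset.Icc 1 (n-1), ((A1 n d).card + (A2 n d).card + (As n d).card) := by
    apply Finset.sum_le_sum
    intro d _
    exact le_trans (Finset.card_union_le _ _)
      (by have := Finset.card_union_le (A1 n d) (A2 n d); omega)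
  omega

end TTL


set_option maxHeartbeats 1600000 in
/-- Theorem 3.2: the total number of nodes (counting the root) contained in all
2-tree-lines starting from the root that lie within the full binary tree with
`n` levels (hence `m = 2^n - 1` nodes) is at most `2n * (2^n)^(29/10)`, i.e.
the brute force method over all 2-tree-lines runs in time `O(m^{2.9} log m)`. -/
theorem brute_force_two_tree_lines_run_time (n : ℕ) (hn : 1 ≤ n) :
    ∃ hS : {v : List (List Bool) |
        IsTwoTreeLine v ∧ ∀ p ∈ v, p.length ≤ n - 1}.Finite,
      ∑ v ∈ hS.toFinset, ((v.length : ℝ) + 1) ≤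
        (2 * n) * ((2 : ℝ) ^ n) ^ ((29 : ℝ) / 10) := by
  classical
  open TTL in
  refine ⟨TTL.lineFinite n, ?_⟩
  have hFdef : (TTL.lineFinite n).toFinset = TTL.F n := rfl
  rw [hFdef]
  -- basic real constants
  set s : ℝ := Real.sqrt 3 with hsdef
  have hs2 : s ^ 2 = 3 := Real.sq_sqrt (by norm_num)
  have hs0 : (0:ℝ) ≤ s := Real.sqrt_nonneg 3
  have hsge : (3:ℝ)/2 ≤ s := by nlinarith
  have hsle : s ≤ 1.7328 := by nlinarith
  set μ : ℝ := (2:ℝ) ^ ((29:ℝ)/10) with hμdef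
  have hμ0 : (0:ℝ) ≤ μ := Real.rpow_nonneg (by norm_num) _
  have hμ4 : (4:ℝ) ≤ μ := by
    have h4 : ((2:ℝ)) ^ (((2:ℕ)):ℝ) = 4 := by
      rw [Real.rpow_natCast]; norm_num
    calc (4:ℝ) = 2 ^ (((2:ℕ)):ℝ) := h4.symm
      _ ≤ μ := by
          apply Real.rpow_le_rpow_of_exponent_le (by norm_num)
          push_cast; norm_num
  have hμpow : μ ^ (10:ℕ) = (2:ℝ) ^ (29:ℕ) := by
    rw [hμdef, ← Real.rpow_natCast ((2:ℝ) ^ ((29:ℝ)/10)) 10,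
      ← Real.rpow_natCast (2:ℝ) 29, ← Real.rpow_mul (by norm_num : (0:ℝ) ≤ 2)]
    norm_num
  have hlam : 4 + 2*s ≤ μ := by
    apply le_of_pow_le_pow_left₀ (n := 10) (by norm_num) hμ0
    rw [hμpow]
    have e2 : (4+2*s)^2 = 28+16*s := by linear_combination (4:ℝ)*hs2
    have e4 : (28+16*s)^2 = 1552+896*s := by linear_combination (256:ℝ)*hs2
    have e8 : (1552+896*s)^2 = 4817152+2781184*s := by linear_combination (802816:ℝ)*hs2
    calc (4+2*s)^(10:ℕ) = ((4+2*s)^2)^5 := by ring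
      _ = (28+16*s)^5 := by rw [e2]
      _ = ((28+16*s)^2)^2 * (28+16*s) := by ring
      _ = (1552+896*s)^2 * (28+16*s) := by rw [e4]
      _ = (4817152+2781184*s) * (28+16*s) := by rw [e8]
      _ ≤ (2:ℝ)^(29:ℕ) := by nlinarith [hs2, hsle, hs0]
  -- weighted growth
  have hstep : ∀ d : ℕ, 1 ≤ d →
      ((TTL.A1 n (d+1)).card : ℝ) + s * ((TTL.A2 n (d+1)).card : ℝ) ≤
      (4 + 2*s) * (((TTL.A1 n d).card : ℝ) + s * ((TTL.A2 n d).card : ℝ)) := by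
    intro d hd
    have c1 : ((TTL.A1 n (d+1)).card : ℝ) ≤
        2 * (((TTL.A1 n d).card : ℝ) + ((TTL.A2 n d).card : ℝ) + ((TTL.As n d).card : ℝ)) := by
      have := TTL.card_A1_le n d hd
      have h : ((_ : ℕ) : ℝ) ≤ ((_ : ℕ) : ℝ) := Nat.cast_le.mpr this
      push_cast at h
      linarith
    have c2 : ((TTL.A2 n (d+1)).card : ℝ) ≤ 2 * ((TTL.As n d).card : ℝ) := by
      have := TTL.card_A2_le n d hd
      have h : ((_ : ℕ) : ℝ) ≤ ((_ : ℕ) : ℝ) := Nat.cast_le.mpr this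
      push_cast at h
      linarith
    have cs : ((TTL.As n d).card : ℝ) ≤
        ((TTL.A1 n d).card : ℝ) + 2 * ((TTL.A2 n d).card : ℝ) := by
      have := TTL.card_As_le n d hd
      have h : ((_ : ℕ) : ℝ) ≤ ((_ : ℕ) : ℝ) := Nat.cast_le.mpr this
      push_cast at h
      linarith
    have expand : (4 + 2*s) * (((TTL.A1 n d).card : ℝ) + s * ((TTL.A2 n d).card : ℝ)) =
        4*((TTL.A1 n d).card : ℝ) + 2*s*((TTL.A1 n d).card : ℝ) +
        4*s*((TTL.A2 n d).card : ℝ) + 6*((TTL.A2 n d).card : ℝ) := by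
      linear_combination (2*((TTL.A2 n d).card : ℝ))*hs2
    rw [expand]
    have m1 : s * ((TTL.As n d).card : ℝ) ≤
        s * (((TTL.A1 n d).card : ℝ) + 2 * ((TTL.A2 n d).card : ℝ)) :=
      mul_le_mul_of_nonneg_left cs hs0
    have m2 : s * ((TTL.A2 n (d+1)).card : ℝ) ≤ s * (2 * ((TTL.As n d).card : ℝ)) :=
      mul_le_mul_of_nonneg_left c2 hs0
    nlinarith [m1, m2, c1, cs]
  have hgrow : ∀ d : ℕ, 1 ≤ d →
      ((TTL.A1 n d).card : ℝ) + s * ((TTL.A2 n d).card : ℝ) ≤ 2 * μ^(d-1) := by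
    intro d hd
    induction d, hd using Nat.le_induction with
    | base =>
      have h1 := TTL.card_A1_one n
      have h2 := TTL.card_A2_one n
      have h1' : ((TTL.A1 n 1).card : ℝ) ≤ 2 := by exact_mod_cast h1
      have h2' : ((TTL.A2 n 1).card : ℝ) = 0 := by simp [h2]
      simp [h2', pow_zero]
      linarith
    | succ d hd ih =>
      have hX0 : (0:ℝ) ≤ ((TTL.A1 n d).card : ℝ) + s * ((TTL.A2 n d).card : ℝ) :=
        add_nonneg (Nat.cast_nonneg _) (mul_nonneg hs0 (Nat.cast_nonneg _))
      have hdd : d - 1 + 1 = d := by omega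
      calc ((TTL.A1 n (d+1)).card : ℝ) + s * ((TTL.A2 n (d+1)).card : ℝ) ≤
          (4 + 2*s) * (((TTL.A1 n d).card : ℝ) + s * ((TTL.A2 n d).card : ℝ)) := hstep d hd
        _ ≤ μ * (((TTL.A1 n d).card : ℝ) + s * ((TTL.A2 n d).card : ℝ)) :=
            mul_le_mul_of_nonneg_right hlam hX0
        _ ≤ μ * (2 * μ^(d-1)) := mul_le_mul_of_nonneg_left ih hμ0
        _ = 2 * μ^((d+1)-1) := by
            have he : (d+1)-1 = (d-1)+1 := by omega
            rw [he, pow_succ]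
            ring
  have hTd : ∀ d : ℕ, 1 ≤ d →
      (((TTL.A1 n d).card + (TTL.A2 n d).card + (TTL.As n d).card : ℕ) : ℝ) ≤ 4 * μ^(d-1) := by
    intro d hd
    have cs : ((TTL.As n d).card : ℝ) ≤
        ((TTL.A1 n d).card : ℝ) + 2 * ((TTL.A2 n d).card : ℝ) := by
      have := TTL.card_As_le n d hd
      have h : ((_ : ℕ) : ℝ) ≤ ((_ : ℕ) : ℝ) := Nat.cast_le.mpr this
      push_cast at h
      linarith
    have hg := hgrow d hd
    have hn2 : (0:ℝ) ≤ ((TTL.A2 n d).card : ℝ) := Nat.cast_nonneg _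
    push_cast
    nlinarith [cs, hg, hsge, hn2]
  -- sum over the line set
  have h_each : ∀ v ∈ TTL.F n, ((v.length : ℝ) + 1) ≤ (2*(n:ℝ) - 1) := by
    intro v hv
    obtain ⟨hline, hb⟩ := TTL.mem_F.mp hv
    have := TTL.ttl_length_le hline hn hb
    have hcast : ((v.length + 1 : ℕ) : ℝ) ≤ ((2*n - 1 : ℕ) : ℝ) := Nat.cast_le.mpr this
    rw [Nat.cast_sub (by omega)] at hcast
    push_cast at hcast ⊢
    linarith
  have hsum1 : ∑ v ∈ TTL.F n, ((v.length : ℝ) + 1) ≤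
      ((TTL.F n).card : ℝ) * (2*(n:ℝ) - 1) := by
    have := Finset.sum_le_card_nsmul (TTL.F n) (fun v => ((v.length : ℝ) + 1))
      (2*(n:ℝ) - 1) h_each
    rwa [nsmul_eq_mul] at this
  -- bound on the cardinality of F n
  have hreindex : ∑ d ∈ Finset.Icc 1 (n-1), μ^(d-1) = ∑ i ∈ Finset.range (n-1), μ^i := by
    rw [← Finset.Ico_add_one_right_eq_Icc, Finset.sum_Ico_eq_sum_range]
    simp
  have hsum_nonneg : (0:ℝ) ≤ ∑ i ∈ Finset.range (n-1), μ^i :=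
    Finset.sum_nonneg (fun i _ => pow_nonneg hμ0 i)
  have hgeo := geom_sum_mul μ (n-1)
  have hP0 : (0:ℝ) ≤ μ^(n-1) := pow_nonneg hμ0 _
  have hgeom_le : ∑ i ∈ Finset.range (n-1), μ^i ≤ μ^(n-1)/3 := by
    nlinarith [hgeo, hμ4, hsum_nonneg, hP0,
      mul_nonneg (by linarith : (0:ℝ) ≤ μ - 4) hsum_nonneg]
  have hcardF : ((TTL.F n).card : ℝ) ≤ 1 + (4/3) * μ^(n-1) := by
    have h0 := TTL.card_F_le n
    have h0' : ((TTL.F n).card : ℝ) ≤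
        1 + ∑ d ∈ Finset.Icc 1 (n-1),
          (((TTL.A1 n d).card + (TTL.A2 n d).card + (TTL.As n d).card : ℕ) : ℝ) := by
      have h : ((_ : ℕ) : ℝ) ≤ ((_ : ℕ) : ℝ) := Nat.cast_le.mpr h0
      push_cast at h ⊢
      linarith
    have h1 : ∑ d ∈ Finset.Icc 1 (n-1),
        (((TTL.A1 n d).card + (TTL.A2 n d).card + (TTL.As n d).card : ℕ) : ℝ) ≤
        ∑ d ∈ Finset.Icc 1 (n-1), 4 * μ^(d-1) := by
      apply Finset.sum_le_sum
      intro d hd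
      exact hTd d (Finset.mem_Icc.mp hd).1
    have h2 : ∑ d ∈ Finset.Icc 1 (n-1), 4 * μ^(d-1) = 4 * ∑ i ∈ Finset.range (n-1), μ^i := by
      rw [← Finset.mul_sum, hreindex]
    calc ((TTL.F n).card : ℝ) ≤ _ := h0'
      _ ≤ 1 + ∑ d ∈ Finset.Icc 1 (n-1), 4 * μ^(d-1) := by linarith
      _ = 1 + 4 * ∑ i ∈ Finset.range (n-1), μ^i := by rw [h2]
      _ ≤ 1 + 4 * (μ^(n-1)/3) := by linarith [hgeom_le]
      _ = 1 + (4/3) * μ^(n-1) := by ring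
  -- final arithmetic
  have hn' : (1:ℝ) ≤ (n:ℝ) := by exact_mod_cast hn
  have hP1 : (1:ℝ) ≤ μ^(n-1) := one_le_pow₀ (by linarith)
  have hμn : μ^n = μ^(n-1) * μ := by
    rw [← pow_succ]
    congr 1
    omega
  have hF0 : (0:ℝ) ≤ ((TTL.F n).card : ℝ) := Nat.cast_nonneg _
  have htarget : ((2:ℝ)^n) ^ ((29:ℝ)/10) = μ^n := by
    rw [hμdef, ← Real.rpow_natCast (2:ℝ) n, ← Real.rpow_mul (by norm_num : (0:ℝ) ≤ 2),
      mul_comm, Real.rpow_mul (by norm_num : (0:ℝ) ≤ 2), Real.rpow_natCast]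
  rw [htarget]
  have hfinal : ((TTL.F n).card : ℝ) * (2*(n:ℝ) - 1) ≤ (2 * (n:ℝ)) * μ^n := by
    have h1 : ((TTL.F n).card : ℝ) * (2*(n:ℝ) - 1) ≤
        (1 + (4/3) * μ^(n-1)) * (2*(n:ℝ) - 1) :=
      mul_le_mul_of_nonneg_right hcardF (by linarith)
    have h2 : (1 + (4/3) * μ^(n-1)) * (2*(n:ℝ) - 1) ≤
        ((7/3) * μ^(n-1)) * (2*(n:ℝ) - 1) :=
      mul_le_mul_of_nonneg_right (by linarith) (by linarith)
    have h3 : ((7/3) * μ^(n-1)) * (2*(n:ℝ) - 1) ≤ (2 * (n:ℝ)) * (μ^(n-1) * μ) := by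
      have b1 : ((7/3) * μ^(n-1)) * (2*(n:ℝ) - 1) ≤ ((7/3) * μ^(n-1)) * (2*(n:ℝ)) :=
        mul_le_mul_of_nonneg_left (by linarith) (by positivity)
      have b2 : ((7/3) * μ^(n-1)) * (2*(n:ℝ)) ≤ (μ * μ^(n-1)) * (2*(n:ℝ)) := by
        apply mul_le_mul_of_nonneg_right _ (by linarith)
        exact mul_le_mul_of_nonneg_right (by linarith) hP0
      calc ((7/3) * μ^(n-1)) * (2*(n:ℝ) - 1) ≤ _ := b1
        _ ≤ (μ * μ^(n-1)) * (2*(n:ℝ)) := b2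
        _ = (2 * (n:ℝ)) * (μ^(n-1) * μ) := by ring
    calc ((TTL.F n).card : ℝ) * (2*(n:ℝ) - 1) ≤ _ := h1
      _ ≤ _ := h2
      _ ≤ (2 * (n:ℝ)) * (μ^(n-1) * μ) := h3
      _ = (2 * (n:ℝ)) * μ^n := by rw [hμn]
  calc ∑ v ∈ TTL.F n, ((v.length : ℝ) + 1) ≤ ((TTL.F n).card : ℝ) * (2*(n:ℝ) - 1) := hsum1
    _ ≤ (2 * (n:ℝ)) * μ^n := hfinal
end
end

section
/- (Proposition 3.5) Let ι be a finite index type, let t : ι → Finset α be a family of finite sets (the data trees), let Q be a finite subset of α, and let P : ι → Finset α satisfy P i ⊆ Q for every i. Then ∑_i ( |t i \ P i| + |P i \ t i| ) ≥ ∑_i |t i| − ∑_{v ∈ Q} w(v), where w(v) = |{ i : v ∈ t i }| is the weight of v, i.e., the number of data trees containing v. In particular, taking Q to be the 2-path of a maximal 2-tree-line K* extending a partial 2-tree-line K and P i = P_{K*}(t i) the projections, since the maximum 2-path MP(K) satisfies ∑_{v ∈ MP(K)} w(v) ≥ ∑_{v ∈ Q} w(v), the quantity ∑_i |t i| − ∑_{v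 ∈ MP(K)} w(v) is a lower bound on the objective value ∑_i d(t i, P_{K*}(t i)) of every maximal 2-tree-line extended from K. -/
/-- Proposition 3.5 (core inequality): for data trees `t i` (finite node sets),
a finite node set `Q` (e.g. the 2-path of a maximal 2-tree-line), and
node sets `P i ⊆ Q` (e.g. the projections onto that 2-tree-line), the total
Hamming distance `∑ i, d(t i, P i)` is at least
`∑ i, |t i| - ∑_{v ∈ Q} w v`, where `w v` is the number of data trees
containing the node `v`. -/
theorem two_path_weight_lower_bound {ι α : Type*} [Fintype ι] [DecidableEq α]
    (t : ι → Finset α) (Q : Finset α) (P : ι → Finset α)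
    (hP : ∀ i, P i ⊆ Q) :
    (∑ i, (((t i \ P i).card : ℤ) + ((P i \ t i).card : ℤ))) ≥
      (∑ i, ((t i).card : ℤ)) -
        ∑ v ∈ Q, ((Finset.univ.filter fun i => v ∈ t i).card : ℤ) := by
  have hdouble : (∑ v ∈ Q, ((Finset.univ.filter fun i => v ∈ t i).card : ℤ))
      = ∑ i, ((t i ∩ Q).card : ℤ) := by
    have : ∀ v ∈ Q, ((Finset.univ.filter fun i => v ∈ t i).card : ℤ)
        = ∑ i : ι, if v ∈ t i then (1 : ℤ) else 0 := by
      intro v _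
      rw [Finset.card_filter]; push_cast; rfl
    rw [Finset.sum_congr rfl this, Finset.sum_comm]
    refine Finset.sum_congr rfl fun i _ => ?_
    rw [Finset.sum_ite_mem, Finset.inter_comm]
    simp
  rw [hdouble, ge_iff_le, ← Finset.sum_sub_distrib]
  refine Finset.sum_le_sum fun i _ => ?_
  have h1 : (t i).card - (t i ∩ Q).card ≤ (t i \ P i).card := by
    have h2 : (t i ∩ P i).card ≤ (t i ∩ Q).card :=
      Finset.card_le_card (Finset.inter_subset_inter_left (hP i))
    have h3 : (t i \ P i).card = (t i).card - (t i ∩ P i).card :=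
      Finset.card_sdiff_add_card_inter (t i) (P i) ▸ (Nat.sub_eq_of_eq_add rfl).symm
    omega
  have := (Finset.sdiff_subset : P i \ t i ⊆ P i)
  omega
end
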